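/- arXiv:1809.07511 — 4 statements merged into one kernel-verified Lean document; each statement's English description precedes it below -/
import Mathlib

section
/- Let n ≥ 1, let a_0(n), a_1(n) be real numbers with 2a_0(n) + a_1(n) = 1, let f : [0,1] → ℝ be continuous, and let x ∈ [0,1]. Then |B_n^{M,1}(f;x) − f(x)| ≤ |B_n(f;x) − f(x)| + |(1 + a_1(n))(1/2 − x)| · ω₁(f; 1/n). -/
open scoped BigOperators
open Set Filter MeasureTheory

/-- Bernstein fundamental function `p_{n,k}` (vanishes for `k > n` since `choose = 0`). -/
noncomputable def bp (n k : ℕ) (x : ℝ) : ℝ :=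
  (n.choose k : ℝ) * x ^ k * (1 - x) ^ (n - k)

/-- Bernstein fundamental function with integer index, vanishing for negative `k`. -/
noncomputable def bpz (n : ℕ) (k : ℤ) (x : ℝ) : ℝ :=
  if 0 ≤ k then bp n k.toNat x else 0

/-- The classical Bernstein operator `B_n`. -/
noncomputable def Bern (n : ℕ) (f : ℝ → ℝ) (x : ℝ) : ℝ :=
  ∑ k ∈ Finset.range (n + 1), bp n k x * f (k / n)

/-- Modified fundamental function `p_{n,k}^{M,1}` with `a(x,n) = a1*x + a0`. -/
noncomputable def bpM1 (a0 a1 : ℝ) (n k : ℕ) (x : ℝ) : ℝ :=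
  (a1 * x + a0) * bp (n - 1) k x + (a1 * (1 - x) + a0) * bpz (n - 1) ((k : ℤ) - 1) x

/-- The modified Bernstein operator `B_n^{M,1}`. -/
noncomputable def BernM1 (a0 a1 : ℝ) (n : ℕ) (f : ℝ → ℝ) (x : ℝ) : ℝ :=
  ∑ k ∈ Finset.range (n + 1), bpM1 a0 a1 n k x * f (k / n)

/-- Second modified fundamental function `p_{n,k}^{M,2}`. -/
noncomputable def bpM2 (n k : ℕ) (x : ℝ) : ℝ :=
  ((n : ℝ) / 2 * x ^ 2 + (-1 - (n : ℝ) / 2) * x + 1) * bp (n - 2) k x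
    + (n : ℝ) * x * (1 - x) * bpz (n - 2) ((k : ℤ) - 1) x
    + ((n : ℝ) / 2 * x ^ 2 + (-(n : ℝ) / 2 + 1) * x) * bpz (n - 2) ((k : ℤ) - 2) x

/-- The second modified Bernstein operator `B_n^{M,2}`. -/
noncomputable def BernM2 (n : ℕ) (f : ℝ → ℝ) (x : ℝ) : ℝ :=
  ∑ k ∈ Finset.range (n + 1), bpM2 n k x * f (k / n)

/-- The Kantorovich operator `K_n`. -/
noncomputable def Kan (n : ℕ) (f : ℝ → ℝ) (x : ℝ) : ℝ :=
  ((n : ℝ) + 1) * ∑ k ∈ Finset.range (n + 1),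
    bp n k x * ∫ t in ((k : ℝ) / (n + 1))..(((k : ℝ) + 1) / (n + 1)), f t

/-- The modified Kantorovich operator `K_n^{M,1}`. -/
noncomputable def KanM1 (a0 a1 : ℝ) (n : ℕ) (f : ℝ → ℝ) (x : ℝ) : ℝ :=
  ((n : ℝ) + 1) * ∑ k ∈ Finset.range (n + 1),
    bpM1 a0 a1 n k x * ∫ t in ((k : ℝ) / (n + 1))..(((k : ℝ) + 1) / (n + 1)), f t

/-- The Durrmeyer operator `D_n`. -/
noncomputable def Dur (n : ℕ) (f : ℝ → ℝ) (x : ℝ) : ℝ :=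
  ((n : ℝ) + 1) * ∑ k ∈ Finset.range (n + 1),
    bp n k x * ∫ t in (0:ℝ)..1, bp n k t * f t

/-- The modified Durrmeyer operator `D_n^{M,1}`. -/
noncomputable def DurM1 (a0 a1 : ℝ) (n : ℕ) (f : ℝ → ℝ) (x : ℝ) : ℝ :=
  ((n : ℝ) + 1) * ∑ k ∈ Finset.range (n + 1),
    bpM1 a0 a1 n k x * ∫ t in (0:ℝ)..1, bp n k t * f t

/-- The genuine Bernstein–Durrmeyer operator `U_n`. -/
noncomputable def Gen (n : ℕ) (f : ℝ → ℝ) (x : ℝ) : ℝ :=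
  (1 - x) ^ n * f 0 + x ^ n * f 1 +
    ((n : ℝ) - 1) * ∑ k ∈ Finset.Icc 1 (n - 1),
      bp n k x * ∫ t in (0:ℝ)..1, bp (n - 2) (k - 1) t * f t

/-- The modified genuine Bernstein–Durrmeyer operator `U_n^{M,1}`. -/
noncomputable def GenM1 (a0 a1 : ℝ) (n : ℕ) (f : ℝ → ℝ) (x : ℝ) : ℝ :=
  (a1 * x + a0) * (1 - x) ^ (n - 1) * f 0 + (a1 * (1 - x) + a0) * x ^ (n - 1) * f 1 +
    ((n : ℝ) - 1) * ∑ k ∈ Finset.Icc 1 (n - 1),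
      bpM1 a0 a1 n k x * ∫ t in (0:ℝ)..1, bp (n - 2) (k - 1) t * f t

/-- First modulus of continuity on `[0,1]`. -/
noncomputable def omega1 (f : ℝ → ℝ) (δ : ℝ) : ℝ :=
  sSup {y | ∃ s t : ℝ, s ∈ Icc (0:ℝ) 1 ∧ t ∈ Icc (0:ℝ) 1 ∧ |s - t| ≤ δ ∧ y = |f s - f t|}

/-- Second modulus of smoothness on `[0,1]`. -/
noncomputable def omega2 (f : ℝ → ℝ) (δ : ℝ) : ℝ :=
  sSup {y | ∃ t h : ℝ, 0 < h ∧ h ≤ δ ∧ t - h ∈ Icc (0:ℝ) 1 ∧ t + h ∈ Icc (0:ℝ) 1 ∧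
    y = |f (t + h) - 2 * f t + f (t - h)|}

/-- Sup norm on `[0,1]`. -/
noncomputable def supNorm (g : ℝ → ℝ) : ℝ :=
  sSup {y | ∃ t ∈ Icc (0:ℝ) 1, y = |g t|}


lemma omega1_bddAbove (f : ℝ → ℝ) (hf : ContinuousOn f (Icc 0 1)) (δ : ℝ) :
    BddAbove {y | ∃ s t : ℝ, s ∈ Icc (0:ℝ) 1 ∧ t ∈ Icc (0:ℝ) 1 ∧ |s - t| ≤ δ ∧ y = |f s - f t|} := by
  obtain ⟨C, hC⟩ := isCompact_Icc.exists_bound_of_continuousOn hf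
  refine ⟨C + C, ?_⟩
  rintro y ⟨s, t, hs, ht, -, rfl⟩
  calc |f s - f t| ≤ |f s| + |f t| := abs_sub _ _
    _ ≤ C + C := add_le_add (hC s hs) (hC t ht)

lemma le_omega1 (f : ℝ → ℝ) (hf : ContinuousOn f (Icc 0 1)) (δ : ℝ) (s t : ℝ)
    (hs : s ∈ Icc (0:ℝ) 1) (ht : t ∈ Icc (0:ℝ) 1) (hst : |s - t| ≤ δ) :
    |f s - f t| ≤ omega1 f δ :=
  le_csSup (omega1_bddAbove f hf δ) ⟨s, t, hs, ht, hst, rfl⟩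

lemma omega1_nonneg (f : ℝ → ℝ) (hf : ContinuousOn f (Icc 0 1)) (δ : ℝ) (hδ : 0 ≤ δ) :
    0 ≤ omega1 f δ := by
  have := le_omega1 f hf δ 0 0 (by simp) (by simp) (by simpa using hδ)
  simpa using le_trans (abs_nonneg _) this

lemma bp_nonneg (n k : ℕ) (x : ℝ) (hx : x ∈ Icc (0:ℝ) 1) : 0 ≤ bp n k x := by
  obtain ⟨h0, h1⟩ := hx
  exact mul_nonneg (mul_nonneg (by positivity) (pow_nonneg h0 _)) (pow_nonneg (by linarith) _)

lemma bp_sum_one (n : ℕ) (x : ℝ) : ∑ k ∈ Finset.range (n + 1), bp n k x = 1 := by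
  have h := add_pow x (1 - x) n
  simp only [add_sub_cancel, one_pow] at h
  exact (Finset.sum_congr rfl fun k _ => by unfold bp; ring).trans h.symm

lemma bp_pascal (n k : ℕ) (hn : 1 ≤ n) (x : ℝ) :
    bp n k x = (1 - x) * bp (n - 1) k x + x * bpz (n - 1) ((k : ℤ) - 1) x := by
  obtain ⟨m, rfl⟩ : ∃ m, n = m + 1 := ⟨n - 1, (Nat.succ_pred_eq_of_pos hn).symm⟩
  simp only [Nat.add_sub_cancel]
  rcases k with _ | j
  · simp only [bpz, CharP.cast_eq_zero, zero_sub]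
    rw [if_neg (by norm_num)]
    unfold bp
    simp [pow_succ]
    ring
  · have hz : bpz m ((↑(j+1) : ℤ) - 1) x = bp m j x := by
      simp only [bpz]
      rw [if_pos (by push_cast; omega)]
      norm_num
    rw [hz]
    rcases le_or_gt (j + 1) m with h | h
    · -- j + 1 ≤ m
      unfold bp
      have hc : ((m+1).choose (j+1) : ℝ) = (m.choose j : ℝ) + (m.choose (j+1) : ℝ) := by
        rw [Nat.choose_succ_succ]; push_cast; ring
      have he1 : m + 1 - (j + 1) = (m - (j+1)) + 1 := by omega
      have he2 : m - j = m + 1 - (j + 1) := by omega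
      rw [hc, he1]
      have he3 : m - j = (m - (j+1)) + 1 := by omega
      rw [he3, pow_succ, pow_succ]
      ring
    · rcases eq_or_lt_of_le (Nat.succ_le_of_lt h) with h' | h'
      · -- j + 1 = m + 1, i.e. j = m
        have hj : j = m := by omega
        subst hj
        unfold bp
        rw [Nat.choose_self, Nat.choose_succ_self, Nat.choose_self]
        simp [pow_succ]
        ring
      · -- j + 1 > m + 1: all choose vanish
        unfold bp
        rw [Nat.choose_eq_zero_of_lt (by omega), Nat.choose_eq_zero_of_lt (by omega),
          Nat.choose_eq_zero_of_lt (by omega)]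
        simp

/-- pointwise estimate for the modified Bernstein operator `B_n^{M,1}`. -/
theorem stmt0 (n : ℕ) (hn : 1 ≤ n) (a0 a1 : ℝ) (ha : 2 * a0 + a1 = 1)
    (f : ℝ → ℝ) (hf : ContinuousOn f (Icc 0 1)) (x : ℝ) (hx : x ∈ Icc (0:ℝ) 1) :
    |BernM1 a0 a1 n f x - f x| ≤
      |Bern n f x - f x| + |(1 + a1) * (1 / 2 - x)| * omega1 f (1 / n) := by
  have hδ : (0:ℝ) < 1 / n := by positivity
  set m := n - 1 with hm
  have hnm : n = m + 1 := by omega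
  set c : ℝ := (1 + a1) * (x - 1/2) with hc
  have hc0 : a1 * x + a0 - (1 - x) = c := by
    rw [hc]; linarith
  have hc1 : a1 * (1 - x) + a0 - x = -c := by
    rw [hc]; linarith
  -- key identity
  have key : BernM1 a0 a1 n f x - Bern n f x
      = c * ∑ j ∈ Finset.range (m + 1), bp m j x * (f (j / n) - f ((j + 1) / n)) := by
    have step1 : BernM1 a0 a1 n f x - Bern n f x
        = ∑ k ∈ Finset.range (n + 1),
            c * (bp m k x - bpz m ((k : ℤ) - 1) x) * f (k / n) := by
      unfold BernM1 Bern
      rw [← Finset.sum_sub_distrib]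
      refine Finset.sum_congr rfl fun k _ => ?_
      rw [bp_pascal n k hn x]
      simp only [bpM1, ← hm]
      linear_combination (bp m k x * f (k / n)) * hc0 + (bpz m ((k:ℤ)-1) x * f (k / n)) * hc1
    rw [step1]
    have split : ∀ k ∈ Finset.range (n+1),
        c * (bp m k x - bpz m ((k : ℤ) - 1) x) * f (k / n)
        = c * (bp m k x * f (k/n)) - c * (bpz m ((k : ℤ) - 1) x * f (k/n)) := by
      intro k _; ring
    rw [Finset.sum_congr rfl split, Finset.sum_sub_distrib, ← Finset.mul_sum, ← Finset.mul_sum]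
    have hA : ∑ k ∈ Finset.range (n+1), bp m k x * f (k/n)
        = ∑ j ∈ Finset.range (m+1), bp m j x * f (j/n) := by
      rw [hnm, Finset.sum_range_succ]
      have : bp m (m+1) x = 0 := by
        unfold bp; rw [Nat.choose_succ_self]; simp
      rw [this, zero_mul, add_zero]
    have hB : ∑ k ∈ Finset.range (n+1), bpz m ((k : ℤ) - 1) x * f (k/n)
        = ∑ j ∈ Finset.range (m+1), bp m j x * f ((j+1)/n) := by
      rw [hnm, Finset.sum_range_succ']
      have h0 : bpz m ((0 : ℤ) - 1) x = 0 := by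
        simp only [bpz]; rw [if_neg (by norm_num)]
      simp only [Nat.cast_zero, h0, zero_mul, add_zero]
      refine Finset.sum_congr rfl fun j _ => ?_
      have : bpz m ((↑(j+1) : ℤ) - 1) x = bp m j x := by
        simp only [bpz]; rw [if_pos (by push_cast; omega)]; norm_num
      rw [this]; push_cast; ring_nf
    rw [hA, hB, ← mul_sub, ← Finset.sum_sub_distrib]
    congr 1
    refine Finset.sum_congr rfl fun j _ => ?_
    ring
  -- bound the difference
  have hω : 0 ≤ omega1 f (1 / n) := omega1_nonneg f hf _ hδ.le
  have bound : |BernM1 a0 a1 n f x - Bern n f x| ≤ |c| * omega1 f (1 / n) := by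
    rw [key, abs_mul]
    gcongr  -- hope reduces to |sum| ≤ omega1
    calc |∑ j ∈ Finset.range (m + 1), bp m j x * (f (j / n) - f ((j + 1) / n))|
        ≤ ∑ j ∈ Finset.range (m + 1), |bp m j x * (f (j / n) - f ((j + 1) / n))| :=
          Finset.abs_sum_le_sum_abs _ _
      _ ≤ ∑ j ∈ Finset.range (m + 1), bp m j x * omega1 f (1 / n) := by
          refine Finset.sum_le_sum fun j hj => ?_
          rw [abs_mul, abs_of_nonneg (bp_nonneg m j x hx)]
          refine mul_le_mul_of_nonneg_left ?_ (bp_nonneg m j x hx)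
          refine le_omega1 f hf _ _ _ ?_ ?_ ?_
          · constructor
            · positivity
            · rw [div_le_one (by positivity)]
              have : (j:ℝ) ≤ n := by
                have := Finset.mem_range.mp hj
                have hjn : j ≤ n := by omega
                exact_mod_cast hjn
              linarith [this]
          · constructor
            · positivity
            · rw [div_le_one (by positivity)]
              have hjn : j + 1 ≤ n := by
                have := Finset.mem_range.mp hj; omega
              have : (j:ℝ) + 1 ≤ n := by exact_mod_cast hjn
              linarith
          · rw [div_sub_div_same]
            have : ((j:ℝ) - (j + 1)) = -1 := by ring
            rw [this]
            rw [abs_div, abs_neg, abs_one, abs_of_pos (by positivity : (0:ℝ) < (n:ℝ))]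
      _ = omega1 f (1 / n) := by
          rw [← Finset.sum_mul, bp_sum_one, one_mul]
  have hcabs : |c| = |(1 + a1) * (1 / 2 - x)| := by
    rw [hc]
    rw [show (1 + a1) * (x - 1/2) = -((1 + a1) * (1/2 - x)) by ring, abs_neg]
  calc |BernM1 a0 a1 n f x - f x|
      = |(Bern n f x - f x) + (BernM1 a0 a1 n f x - Bern n f x)| := by ring_nf
    _ ≤ |Bern n f x - f x| + |BernM1 a0 a1 n f x - Bern n f x| := abs_add_le _ _
    _ ≤ |Bern n f x - f x| + |(1 + a1) * (1 / 2 - x)| * omega1 f (1 / n) := by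
        rw [← hcabs]; exact add_le_add_right bound _
end

section
/- Let n ≥ 1, let a_0(n), a_1(n) be real numbers with 2a_0(n) + a_1(n) = 1, let f : [0,1] → ℝ be continuous, and let x ∈ [0,1]. Then n·(B_n^{M,1}(f;x) − B_n(f;x)) = (1 + a_1(n))(1/2 − x) · (B_n f)′(x), where (B_n f)′ denotes the derivative of the polynomial x ↦ B_n(f;x). -/
open scoped BigOperators
open Set Filter MeasureTheory

lemma bpz_succ (n j : ℕ) (x : ℝ) : bpz n ((j:ℤ) + 1 - 1) x = bp n j x := by
  rw [show (j:ℤ) + 1 - 1 = (j:ℤ) by ring]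
  simp [bpz]

lemma bpz_zero (n : ℕ) (x : ℝ) : bpz n ((0:ℤ) - 1) x = 0 := by
  simp [bpz]

lemma bp_rec (n k : ℕ) (hn : 1 ≤ n) (x : ℝ) :
    bp n k x = (1 - x) * bp (n-1) k x + x * bpz (n-1) ((k:ℤ) - 1) x := by
  rcases Nat.eq_zero_or_pos k with rfl | hk
  · rw [Nat.cast_zero, bpz_zero]
    simp only [bp]
    norm_num
    rw [← pow_succ']
    congr 1
    omega
  · obtain ⟨j, rfl⟩ : ∃ j, k = j + 1 := ⟨k - 1, by omega⟩
    rw [Nat.cast_add, Nat.cast_one, bpz_succ]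
    simp only [bp]
    rcases le_or_gt (j+1) (n-1) with h | h
    · have e1 : n - 1 - (j+1) + 1 = n - (j+1) := by omega
      have e2 : n - 1 - j = n - (j+1) := by omega
      have e3 : n.choose (j+1) = (n-1).choose j + (n-1).choose (j+1) := by
        obtain ⟨m, rfl⟩ : ∃ m, n = m + 1 := ⟨n - 1, by omega⟩
        simpa using Nat.choose_succ_succ m j
      rw [e2, e3]
      push_cast
      rw [← e1]
      ring
    · rcases le_or_gt (j+1) n with h2 | h2
      · have hjn : j + 1 = n := by omega
        have e2 : n - 1 - j = 0 := by omega
        have e4 : n - (j+1) = 0 := by omega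
        have e3 : n.choose (j+1) = (n-1).choose j := by
          rw [hjn, show n - 1 = j by omega]
          simp
        have z1 : (n-1).choose (j+1) = 0 := Nat.choose_eq_zero_of_lt (by omega)
        rw [e2, e4, e3, z1]
        push_cast
        ring
      · have z1 : (n-1).choose (j+1) = 0 := Nat.choose_eq_zero_of_lt (by omega)
        have z2 : (n-1).choose j = 0 := Nat.choose_eq_zero_of_lt (by omega)
        rw [Nat.choose_eq_zero_of_lt h2, z1, z2]
        push_cast
        ring

lemma bp_deriv (n k : ℕ) (hn : 1 ≤ n) (hk : k ≤ n) (x : ℝ) :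
    HasDerivAt (fun y => bp n k y)
      ((n:ℝ) * (bpz (n-1) ((k:ℤ) - 1) x - bp (n-1) k x)) x := by
  have h2 : HasDerivAt (fun y : ℝ => (1 - y) ^ (n - k))
      (-(((n - k : ℕ):ℝ) * (1 - x) ^ (n - k - 1))) x := by
    have := (hasDerivAt_pow (n-k) (1-x)).comp x ((hasDerivAt_id x).const_sub 1)
    simpa [Function.comp_def] using this
  have h3 := ((hasDerivAt_pow k x).mul h2).const_mul ((n.choose k : ℝ))
  have key : (n:ℝ) * (bpz (n-1) ((k:ℤ) - 1) x - bp (n-1) k x) =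
      (n.choose k : ℝ) * (↑k * x ^ (k-1) * (1-x) ^ (n-k) +
        x ^ k * -(((n-k:ℕ):ℝ) * (1-x) ^ (n-k-1))) := by
    have hB : (n:ℝ) * bp (n-1) k x =
        (n.choose k : ℝ) * ((n-k:ℕ):ℝ) * x ^ k * (1-x) ^ (n-k-1) := by
      have e : n - 1 - k = n - k - 1 := by omega
      have hc : n * (n-1).choose k = n.choose k * (n - k) := by
        obtain ⟨m, rfl⟩ : ∃ m, n = m + 1 := ⟨n - 1, by omega⟩
        simpa using (Nat.add_one_mul_choose_eq m k).trans (Nat.choose_succ_right_eq (m+1) k)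
      simp only [bp, e]
      rw [show ((n:ℝ) * ((n-1).choose k * x ^ k * (1-x)^(n-k-1))) =
        ((n * (n-1).choose k : ℕ):ℝ) * x^k * (1-x)^(n-k-1) by push_cast; ring, hc]
      push_cast
      ring
    have hA : (n:ℝ) * bpz (n-1) ((k:ℤ) - 1) x =
        (n.choose k : ℝ) * (k:ℝ) * x ^ (k-1) * (1-x) ^ (n-k) := by
      rcases Nat.eq_zero_or_pos k with rfl | hkpos
      · rw [Nat.cast_zero, bpz_zero]
        simp
      · obtain ⟨j, rfl⟩ : ∃ j, k = j + 1 := ⟨k - 1, by omega⟩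
        rw [Nat.cast_add, Nat.cast_one, bpz_succ]
        simp only [bp]
        have e : n - 1 - j = n - (j+1) := by omega
        have hc : n * (n-1).choose j = n.choose (j+1) * (j+1) := by
          obtain ⟨m, rfl⟩ : ∃ m, n = m + 1 := ⟨n - 1, by omega⟩
          simpa using Nat.add_one_mul_choose_eq m j
        rw [e, show ((n:ℝ) * ((n-1).choose j * x ^ j * (1-x)^(n-(j+1)))) =
          ((n * (n-1).choose j : ℕ):ℝ) * x^j * (1-x)^(n-(j+1)) by push_cast; ring, hc]
        push_cast
        ring_nf
    rw [mul_sub, hA, hB]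
    ring
  rw [key]
  simpa [bp, mul_assoc] using h3

/-- `n (B_n^{M,1} f − B_n f)(x) = (1+a₁(n))(1/2−x)(B_n f)′(x)`. -/
theorem stmt1 (n : ℕ) (hn : 1 ≤ n) (a0 a1 : ℝ) (ha : 2 * a0 + a1 = 1)
    (f : ℝ → ℝ) (hf : ContinuousOn f (Icc 0 1)) (x : ℝ) (hx : x ∈ Icc (0:ℝ) 1) :
    (n : ℝ) * (BernM1 a0 a1 n f x - Bern n f x) =
      (1 + a1) * (1 / 2 - x) * deriv (fun y => Bern n f y) x := by
  have hderiv : HasDerivAt (fun y => Bern n f y)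
      (∑ k ∈ Finset.range (n+1),
        (n:ℝ) * (bpz (n-1) ((k:ℤ)-1) x - bp (n-1) k x) * f (k/n)) x := by
    unfold Bern
    exact HasDerivAt.fun_sum fun k hk =>
      (bp_deriv n k hn (Nat.lt_succ_iff.mp (Finset.mem_range.mp hk)) x).mul_const _
  rw [hderiv.deriv]
  unfold BernM1 Bern
  rw [← Finset.sum_sub_distrib, Finset.mul_sum, Finset.mul_sum]
  apply Finset.sum_congr rfl
  intro k hk
  rw [bp_rec n k hn x]
  have ha0 : a0 = (1 - a1)/2 := by linarith
  subst ha0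
  unfold bpM1
  ring
end

section
/- Let n ≥ 2 and x ∈ [0,1]. Then the operator B_n^{M,2} satisfies: (i) B_n^{M,2}(e_0;x) = 1, (ii) B_n^{M,2}(e_1;x) = x, (iii) B_n^{M,2}(e_2;x) = x² + 2x(1−x)/n², where e_j(t) = t^j. -/
open scoped BigOperators
open Set Filter MeasureTheory

lemma bp_eval (m k : ℕ) (x : ℝ) :
    (bernsteinPolynomial ℝ m k).eval x = bp m k x := by
  simp [bernsteinPolynomial, bp]

lemma S0 (m : ℕ) (x : ℝ) : ∑ k ∈ Finset.range (m+1), bp m k x = 1 := by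
  have := congrArg (Polynomial.eval x) (bernsteinPolynomial.sum ℝ m)
  simpa [Polynomial.eval_finset_sum, bp_eval] using this

lemma S1 (m : ℕ) (x : ℝ) : ∑ k ∈ Finset.range (m+1), (k:ℝ) * bp m k x = m * x := by
  have := congrArg (Polynomial.eval x) (bernsteinPolynomial.sum_smul ℝ m)
  simpa [Polynomial.eval_finset_sum, bp_eval] using this

lemma S2 (m : ℕ) (x : ℝ) :
    ∑ k ∈ Finset.range (m+1), (k:ℝ) * ((k:ℝ) - 1) * bp m k x = m * (m-1 : ℕ) * x^2 := by
  have := congrArg (Polynomial.eval x) (bernsteinPolynomial.sum_mul_smul ℝ m)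
  rw [Polynomial.eval_finset_sum] at this
  simp only [nsmul_eq_mul, Polynomial.eval_mul, Polynomial.eval_natCast, bp_eval,
    Polynomial.eval_pow, Polynomial.eval_X, Nat.cast_mul] at this
  rw [← this]
  apply Finset.sum_congr rfl
  intro k _
  rcases k with _ | k
  · simp
  · push_cast [Nat.succ_sub_one]
    ring

lemma bp_zero_of_lt {m k : ℕ} (h : m < k) (x : ℝ) : bp m k x = 0 := by
  simp [bp, Nat.choose_eq_zero_of_lt h]

lemma bpz_ofNat (m k : ℕ) (x : ℝ) : bpz m (k:ℤ) x = bp m k x := by simp [bpz]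

lemma bpz_neg {m : ℕ} {k : ℤ} (h : k < 0) (x : ℝ) : bpz m k x = 0 := by
  simp [bpz, not_le.2 h]

lemma keylemma (m : ℕ) (x : ℝ) (c1 c2 c3 : ℝ) (f : ℕ → ℝ) :
    ∑ k ∈ Finset.range (m+3),
      (c1 * bp m k x + c2 * bpz m ((k:ℤ)-1) x + c3 * bpz m ((k:ℤ)-2) x) * f k
    = ∑ j ∈ Finset.range (m+1), bp m j x * (c1 * f j + c2 * f (j+1) + c3 * f (j+2)) := by
  simp only [add_mul]
  rw [Finset.sum_add_distrib, Finset.sum_add_distrib]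
  have h1 : ∑ k ∈ Finset.range (m+3), c1 * bp m k x * f k
      = ∑ j ∈ Finset.range (m+1), bp m j x * (c1 * f j) := by
    rw [show m+3 = (m+1)+1+1 from rfl, Finset.sum_range_succ, Finset.sum_range_succ,
      bp_zero_of_lt (by omega) x, bp_zero_of_lt (by omega) x]
    simp only [mul_zero, zero_mul, add_zero]
    exact Finset.sum_congr rfl fun j _ => by ring
  have h2 : ∑ k ∈ Finset.range (m+3), c2 * bpz m ((k:ℤ)-1) x * f k
      = ∑ j ∈ Finset.range (m+1), bp m j x * (c2 * f (j+1)) := by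
    rw [show m+3 = (m+2)+1 from rfl, Finset.sum_range_succ']
    have e0 : c2 * bpz m (((0:ℕ):ℤ)-1) x * f 0 = 0 := by
      rw [bpz_neg (by norm_num) x]; ring
    rw [e0, add_zero]
    have estep : ∀ i : ℕ, c2 * bpz m (((i+1:ℕ):ℤ)-1) x * f (i+1)
        = c2 * bp m i x * f (i+1) := by
      intro i
      rw [show ((i+1:ℕ):ℤ)-1 = (i:ℤ) by push_cast; ring, bpz_ofNat]
    rw [Finset.sum_congr rfl fun i _ => estep i, Finset.sum_range_succ,
      bp_zero_of_lt (by omega) x]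
    simp only [mul_zero, zero_mul, add_zero]
    exact Finset.sum_congr rfl fun j _ => by ring
  have h3 : ∑ k ∈ Finset.range (m+3), c3 * bpz m ((k:ℤ)-2) x * f k
      = ∑ j ∈ Finset.range (m+1), bp m j x * (c3 * f (j+2)) := by
    rw [show m+3 = (m+2)+1 from rfl, Finset.sum_range_succ']
    have e0 : c3 * bpz m (((0:ℕ):ℤ)-2) x * f 0 = 0 := by
      rw [bpz_neg (by norm_num) x]; ring
    rw [e0, add_zero, show m+2 = (m+1)+1 from rfl, Finset.sum_range_succ']
    have e1 : c3 * bpz m (((0+1:ℕ):ℤ)-2) x * f (0+1) = 0 := by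
      rw [bpz_neg (by norm_num) x]; ring
    rw [e1, add_zero]
    have estep : ∀ i : ℕ, c3 * bpz m (((i+1+1:ℕ):ℤ)-2) x * f (i+1+1)
        = bp m i x * (c3 * f (i+2)) := by
      intro i
      rw [show ((i+1+1:ℕ):ℤ)-2 = (i:ℤ) by push_cast; ring, bpz_ofNat]
      ring_nf
    exact Finset.sum_congr rfl fun i _ => estep i
  rw [h1, h2, h3, ← Finset.sum_add_distrib, ← Finset.sum_add_distrib]
  exact Finset.sum_congr rfl fun j _ => by ring

/-- moments of the operator `B_n^{M,2}`. -/
theorem stmt5 (n : ℕ) (hn : 2 ≤ n) (x : ℝ) (hx : x ∈ Icc (0:ℝ) 1) :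
    BernM2 n (fun _ => 1) x = 1 ∧
    BernM2 n (fun t => t) x = x ∧
    BernM2 n (fun t => t ^ 2) x = x ^ 2 + 2 * x * (1 - x) / (n : ℝ) ^ 2 := by
  obtain ⟨m, rfl⟩ : ∃ m, n = m + 2 := ⟨n - 2, by omega⟩
  have hN0 : ((m:ℝ)+2) ≠ 0 := by positivity
  have hmm : (m:ℝ) * ((m-1:ℕ):ℝ) = (m:ℝ)^2 - m := by
    rcases m with _ | m
    · simp
    · push_cast [Nat.succ_sub_one]; ring
  have hB : ∀ f : ℝ → ℝ, BernM2 (m+2) f x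
      = ∑ j ∈ Finset.range (m+1), bp m j x *
        ((((m:ℝ)+2)/2*x^2 + (-1-((m:ℝ)+2)/2)*x + 1) * f (j/((m:ℝ)+2))
          + (((m:ℝ)+2)*x*(1-x)) * f ((j+1)/((m:ℝ)+2))
          + (((m:ℝ)+2)/2*x^2 + (-((m:ℝ)+2)/2+1)*x) * f ((j+2)/((m:ℝ)+2))) := by
    intro f
    have hk := keylemma m x (((m:ℝ)+2)/2*x^2 + (-1-((m:ℝ)+2)/2)*x + 1)
      (((m:ℝ)+2)*x*(1-x)) (((m:ℝ)+2)/2*x^2 + (-((m:ℝ)+2)/2+1)*x)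
      (fun k => f ((k:ℝ)/((m:ℝ)+2)))
    calc BernM2 (m+2) f x
        = ∑ k ∈ Finset.range (m+3),
          ((((m:ℝ)+2)/2*x^2 + (-1-((m:ℝ)+2)/2)*x + 1) * bp m k x
            + (((m:ℝ)+2)*x*(1-x)) * bpz m ((k:ℤ)-1) x
            + (((m:ℝ)+2)/2*x^2 + (-((m:ℝ)+2)/2+1)*x) * bpz m ((k:ℤ)-2) x)
            * f ((k:ℝ)/((m:ℝ)+2)) := by
          unfold BernM2 bpM2
          rw [show m+2+1 = m+3 from rfl, show m+2-2 = m from rfl]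
          refine Finset.sum_congr rfl fun k _ => ?_
          push_cast
          ring
      _ = _ := by
          rw [hk]
          refine Finset.sum_congr rfl fun j _ => ?_
          push_cast
          ring
  refine ⟨?_, ?_, ?_⟩
  · rw [hB]
    have hpt : ∀ j ∈ Finset.range (m+1),
        bp m j x * ((((m:ℝ)+2)/2*x^2 + (-1-((m:ℝ)+2)/2)*x + 1) * 1
          + (((m:ℝ)+2)*x*(1-x)) * 1
          + (((m:ℝ)+2)/2*x^2 + (-((m:ℝ)+2)/2+1)*x) * 1) = bp m j x := fun j _ => by ring
    rw [Finset.sum_congr rfl hpt, S0]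
  · rw [hB]
    have hpt : ∀ j ∈ Finset.range (m+1),
        bp m j x * ((((m:ℝ)+2)/2*x^2 + (-1-((m:ℝ)+2)/2)*x + 1) * ((j:ℝ)/((m:ℝ)+2))
          + (((m:ℝ)+2)*x*(1-x)) * (((j:ℝ)+1)/((m:ℝ)+2))
          + (((m:ℝ)+2)/2*x^2 + (-((m:ℝ)+2)/2+1)*x) * (((j:ℝ)+2)/((m:ℝ)+2)))
        = (1/((m:ℝ)+2)) * ((j:ℝ) * bp m j x) + (2*x/((m:ℝ)+2)) * bp m j x := by
      intro j _
      field_simp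
      ring
    rw [Finset.sum_congr rfl hpt, Finset.sum_add_distrib, ← Finset.mul_sum, ← Finset.mul_sum,
      S1, S0]
    field_simp
  · rw [hB]
    have hpt : ∀ j ∈ Finset.range (m+1),
        bp m j x * ((((m:ℝ)+2)/2*x^2 + (-1-((m:ℝ)+2)/2)*x + 1) * ((j:ℝ)/((m:ℝ)+2))^2
          + (((m:ℝ)+2)*x*(1-x)) * (((j:ℝ)+1)/((m:ℝ)+2))^2
          + (((m:ℝ)+2)/2*x^2 + (-((m:ℝ)+2)/2+1)*x) * (((j:ℝ)+2)/((m:ℝ)+2))^2)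
        = (1/((m:ℝ)+2)^2) * ((j:ℝ) * ((j:ℝ)-1) * bp m j x)
          + ((1+4*x)/((m:ℝ)+2)^2) * ((j:ℝ) * bp m j x)
          + ((((m:ℝ)+2)*x^2 - ((m:ℝ)+2)*x + 4*x)/((m:ℝ)+2)^2) * bp m j x := by
      intro j _
      field_simp
      ring
    rw [Finset.sum_congr rfl hpt, Finset.sum_add_distrib, Finset.sum_add_distrib,
      ← Finset.mul_sum, ← Finset.mul_sum, ← Finset.mul_sum, S2, S1, S0]
    rw [show ((m+2:ℕ):ℝ) = (m:ℝ)+2 by push_cast; ring]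
    rw [show (m:ℝ) * ((m-1:ℕ):ℝ) * x^2 = ((m:ℝ)^2 - m) * x^2 by rw [← hmm]]
    field_simp
    ring
end

section
/- Let n ≥ 1 and x ∈ [0,1]. The central moments of the Durrmeyer operator are: D_n(t−x; x) = (1−2x)/(n+2); D_n((t−x)²; x) = 2[x(1−x)(n−3)+1]/((n+2)(n+3)); D_n((t−x)³; x) = 6(1−2x)[2x(1−x)n + 2x² − 2x + 1]/((n+2)(n+3)(n+4)); and D_n((t−x)⁴; x) = 12[x²(1−x)²n² + 3x(1−x)(7x²−7x+2)n − 10x(1−x)(x²−x+1) + 2]/((n+2)(n+3)(n+4)(n+5)), where D_n((t−x)^j; x) denotes D_n applied at x to the function t ↦ (t−x)^j. -/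
open scoped BigOperators
open Set Filter MeasureTheory

lemma beta_nat (a b : ℕ) : ∫ t in (0:ℝ)..1, t ^ a * (1 - t) ^ b
    = (a.factorial * b.factorial : ℝ) / ((a + b + 1).factorial) := by
  induction b generalizing a with
  | zero =>
    have hfa : ((a+0+1).factorial : ℝ) = ((a:ℝ)+1) * a.factorial := by
      rw [Nat.add_zero, Nat.factorial_succ]; push_cast; ring
    have ha : ((a:ℝ)+1) ≠ 0 := by positivity
    have ha' : (a.factorial:ℝ) ≠ 0 := by positivity
    simp [integral_pow, hfa, Nat.factorial_zero]
    field_simp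
  | succ b ih =>
    have key : ∫ t in (0:ℝ)..1, (1 - t) ^ (b + 1) * t ^ a
        = ((1:ℝ) - 1) ^ (b+1) * (1 ^ (a+1) / (a+1)) - ((1:ℝ) - 0) ^ (b+1) * (0 ^ (a+1) / (a+1))
          - ∫ t in (0:ℝ)..1, (-(b+1) * (1 - t) ^ b) * (t ^ (a+1) / (a+1)) := by
      apply intervalIntegral.integral_mul_deriv_eq_deriv_mul
        (u := fun t => (1 - t)^(b+1)) (u' := fun t => -(b+1) * (1-t)^b)
        (v := fun t => t^(a+1)/(a+1)) (v' := fun t => t^a)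
      · intro t _
        have h1 : HasDerivAt (fun t : ℝ => 1 - t) (-1) t := by
          simpa using (hasDerivAt_id t).const_sub 1
        have h2 := h1.pow (b+1)
        convert h2 using 1
        · funext s; simp
        · simp only [Nat.add_sub_cancel]; push_cast; ring
      · intro t _
        have := (hasDerivAt_pow (a+1) t).div_const ((a:ℝ)+1)
        have ha : ((a:ℝ)+1) ≠ 0 := by positivity
        convert this using 1
        push_cast [Nat.add_sub_cancel]
        field_simp
      · apply Continuous.intervalIntegrable; continuity
      · apply Continuous.intervalIntegrable; continuity
    have comm : ∫ t in (0:ℝ)..1, t ^ a * (1 - t) ^ (b+1)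
        = ∫ t in (0:ℝ)..1, (1 - t) ^ (b+1) * t ^ a := by
      congr 1; ext t; ring
    have pull : ∫ t in (0:ℝ)..1, (-(b+1) * (1 - t) ^ b) * (t ^ (a+1) / ((a:ℝ)+1))
        = (-(b+1) / ((a:ℝ)+1)) * ∫ t in (0:ℝ)..1, t ^ (a+1) * (1 - t) ^ b := by
      rw [← intervalIntegral.integral_const_mul]
      congr 1; ext t; ring
    rw [comm, key, pull, ih (a+1)]
    have ha : ((a:ℝ)+1) ≠ 0 := by positivity
    have hf : ((a + (b+1) + 1).factorial : ℝ) ≠ 0 := by positivity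
    have h1 : (a + 1 + b + 1 : ℕ) = a + (b + 1) + 1 := by ring
    rw [Nat.factorial_succ (a), Nat.factorial_succ b, h1]
    push_cast
    field_simp
    ring


lemma bern_fall (n r : ℕ) (x : ℝ) :
    ∑ k ∈ Finset.range (n+1), (n.choose k : ℝ) * x ^ k * (1-x) ^ (n-k) * (∏ i ∈ Finset.range r, ((k:ℝ) - i))
      = (n.descFactorial r : ℝ) * x ^ r := by
  by_cases h : r ≤ n
  · rw [← Finset.sum_range_add_sum_Ico _ (by omega : r ≤ n+1)]
    have h0 : ∑ k ∈ Finset.range r, (n.choose k : ℝ) * x ^ k * (1-x) ^ (n-k) * (∏ i ∈ Finset.range r, ((k:ℝ) - i)) = 0 := by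
      apply Finset.sum_eq_zero
      intro k hk
      rw [Finset.prod_eq_zero hk (by simp)]
      ring
    rw [h0, zero_add, Finset.sum_Ico_eq_sum_range]
    have hm : n + 1 - r = (n - r) + 1 := by omega
    rw [hm]
    have step : ∀ j ∈ Finset.range ((n-r)+1),
        (n.choose (r+j) : ℝ) * x ^ (r+j) * (1-x) ^ (n-(r+j)) * (∏ i ∈ Finset.range r, (((r+j:ℕ):ℝ) - i))
        = ((n.descFactorial r : ℝ) * x ^ r) * (((n-r).choose j : ℝ) * x ^ j * (1-x) ^ ((n-r)-j)) := by
      intro j hj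
      have hj' : j ≤ n - r := by simpa using Finset.mem_range_succ_iff.mp hj
      have hrj : r + j ≤ n := by omega
      have hprod : (∏ i ∈ Finset.range r, (((r+j:ℕ):ℝ) - i)) = ((r+j).descFactorial r : ℝ) := by
        rw [Nat.descFactorial_eq_prod_range, Nat.cast_prod]
        apply Finset.prod_congr rfl
        intro i hi
        have : i ≤ r + j := by simp at hi; omega
        push_cast [Nat.cast_sub this]
        ring
      have hnat : n.choose (r+j) * (r+j).descFactorial r = n.descFactorial r * (n-r).choose j := by
        rw [Nat.descFactorial_eq_factorial_mul_choose, Nat.descFactorial_eq_factorial_mul_choose,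
          Nat.mul_comm (Nat.factorial r), Nat.mul_assoc, ← Nat.mul_assoc,
          Nat.choose_mul (n := n) (Nat.le_add_right r j)]
        simp [Nat.add_sub_cancel_left]
        ring
      have hcast : (n.choose (r+j) : ℝ) * ((r+j).descFactorial r : ℝ)
          = (n.descFactorial r : ℝ) * ((n-r).choose j : ℝ) := by exact_mod_cast congrArg (Nat.cast (R := ℝ)) hnat
      have hsub : n - (r + j) = (n - r) - j := by omega
      rw [hprod, hsub, pow_add]
      linear_combination ((x ^ r * x ^ j) * (1 - x) ^ ((n-r) - j)) * hcast
    rw [Finset.sum_congr rfl step, ← Finset.mul_sum]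
    have hbin : ∑ j ∈ Finset.range ((n-r)+1), ((n-r).choose j : ℝ) * x ^ j * (1-x) ^ ((n-r)-j) = 1 := by
      have := add_pow x (1-x) (n-r)
      simp only [add_sub_cancel, one_pow] at this
      conv_rhs => rw [this]
      apply Finset.sum_congr rfl
      intro j hj
      ring
    rw [hbin, mul_one]
  · have h0 : ∀ k ∈ Finset.range (n+1), (n.choose k : ℝ) * x ^ k * (1-x) ^ (n-k) * (∏ i ∈ Finset.range r, ((k:ℝ) - i)) = 0 := by
      intro k hk
      have hk' : k < r := by simp at hk; omega
      rw [Finset.prod_eq_zero (Finset.mem_range.mpr hk') (by simp)]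
      ring
    rw [Finset.sum_eq_zero h0, Nat.descFactorial_eq_zero_iff_lt.mpr (by omega)]
    simp


lemma bern_fall' (n r : ℕ) (x : ℝ) :
    ∑ k ∈ Finset.range (n+1), (n.choose k : ℝ) * x ^ k * (1-x) ^ (n-k) * (∏ i ∈ Finset.range r, ((k:ℝ) - i))
      = (∏ i ∈ Finset.range r, ((n:ℝ) - i)) * x ^ r := by
  rw [bern_fall]
  by_cases h : r ≤ n
  · congr 1
    rw [Nat.descFactorial_eq_prod_range, Nat.cast_prod]
    apply Finset.prod_congr rfl
    intro i hi
    have hi' : i ≤ n := by simp at hi; omega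
    push_cast [Nat.cast_sub hi']
    ring
  · rw [Nat.descFactorial_eq_zero_iff_lt.mpr (by omega)]
    rw [Finset.prod_eq_zero (Finset.mem_range.mpr (show n < r by omega)) (by simp)]
    simp

section helpers2
open Finset



lemma fact_shift (k j : ℕ) : ((k+j).factorial : ℝ)
    = k.factorial * ∏ i ∈ Finset.range j, ((k:ℝ) + 1 + i) := by
  induction j with
  | zero => simp
  | succ j ih =>
    rw [show k + (j+1) = (k+j) + 1 from rfl, Nat.factorial_succ, Finset.prod_range_succ]
    push_cast
    rw [ih]
    ring

lemma dur_mono_term (n k j : ℕ) (hk : k ≤ n) :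
    ((n:ℝ)+1) * ∫ t in (0:ℝ)..1, bp n k t * t ^ j
      = (∏ i ∈ Finset.range j, ((k:ℝ) + 1 + i)) / (∏ i ∈ Finset.range j, ((n:ℝ) + 2 + i)) := by
  have hI : ∫ t in (0:ℝ)..1, bp n k t * t ^ j
      = (n.choose k : ℝ) * (((k+j).factorial * (n-k).factorial : ℝ) / ((n+j+1).factorial)) := by
    have hfun : (fun t : ℝ => bp n k t * t ^ j) = fun t => (n.choose k : ℝ) * (t ^ (k+j) * (1-t) ^ (n-k)) := by
      ext t; unfold bp; ring
    rw [hfun, intervalIntegral.integral_const_mul, beta_nat,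
      show k + j + (n - k) + 1 = n + j + 1 from by omega]
  rw [hI]
  have e1 := fact_shift k j
  have e2 : ((n+j+1).factorial : ℝ) = ((n:ℝ)+1) * n.factorial * ∏ i ∈ Finset.range j, ((n:ℝ) + 2 + i) := by
    have h' : n + j + 1 = (n+1) + j := by omega
    have hp : ∀ i ∈ Finset.range j, (((n+1:ℕ)):ℝ) + 1 + (i:ℝ) = (n:ℝ) + 2 + i := fun i _ => by push_cast; ring
    rw [h', fact_shift (n+1) j, Finset.prod_congr rfl hp, Nat.factorial_succ]
    push_cast
    ring
  have e3 : (n.choose k : ℝ) * k.factorial * (n-k).factorial = n.factorial := by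
    exact_mod_cast congrArg (Nat.cast (R := ℝ)) (Nat.choose_mul_factorial_mul_factorial hk)
  have hPn : (0:ℝ) < ∏ i ∈ Finset.range j, ((n:ℝ) + 2 + i) := Finset.prod_pos (fun i _ => by positivity)
  have hn1 : ((n:ℝ)+1) ≠ 0 := by positivity
  have hnf : (n.factorial:ℝ) ≠ 0 := by positivity
  have hkf : (k.factorial:ℝ) ≠ 0 := by positivity
  have hnkf : ((n-k).factorial:ℝ) ≠ 0 := by positivity
  rw [e1, e2]
  field_simp
  linear_combination e3


lemma bp_cont (n k : ℕ) : Continuous (bp n k) := by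
  unfold bp; continuity

lemma dur_monomial (n j : ℕ) (x : ℝ) :
    Dur n (fun t => t ^ j) x
      = (∑ k ∈ Finset.range (n+1), bp n k x * ∏ i ∈ Finset.range j, ((k:ℝ) + 1 + i))
          / (∏ i ∈ Finset.range j, ((n:ℝ) + 2 + i)) := by
  unfold Dur
  rw [Finset.mul_sum, Finset.sum_div]
  apply Finset.sum_congr rfl
  intro k hk
  have hk' : k ≤ n := by simpa using Finset.mem_range_succ_iff.mp hk
  rw [show ((n:ℝ)+1) * (bp n k x * ∫ t in (0:ℝ)..1, bp n k t * t ^ j)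
      = bp n k x * (((n:ℝ)+1) * ∫ t in (0:ℝ)..1, bp n k t * t ^ j) from by ring,
    dur_mono_term n k j hk']
  ring

lemma dur_centered (n j : ℕ) (x : ℝ) :
    Dur n (fun t => (t - x) ^ j) x
      = ∑ i ∈ Finset.range (j+1), (j.choose i : ℝ) * (-x) ^ (j-i) * Dur n (fun t => t ^ i) x := by
  have hint : ∀ k, (∫ t in (0:ℝ)..1, bp n k t * (t - x) ^ j)
      = ∑ i ∈ Finset.range (j+1), (j.choose i : ℝ) * (-x) ^ (j-i) * ∫ t in (0:ℝ)..1, bp n k t * t ^ i := by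
    intro k
    simp_rw [← intervalIntegral.integral_const_mul]
    rw [← intervalIntegral.integral_finset_sum]
    · congr 1
      ext t
      have hb := add_pow t (-x) j
      have : (t - x) ^ j = ∑ i ∈ Finset.range (j+1), t ^ i * (-x) ^ (j-i) * (j.choose i : ℝ) := by
        rw [← hb]; ring_nf
      rw [this, Finset.mul_sum]
      apply Finset.sum_congr rfl
      intro i _
      ring
    · intro i _
      apply Continuous.intervalIntegrable
      exact continuous_const.mul ((bp_cont n k).mul (continuous_pow i))
  unfold Dur
  simp_rw [hint, Finset.mul_sum]
  rw [Finset.sum_comm]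
  apply Finset.sum_congr rfl
  intro i _
  apply Finset.sum_congr rfl
  intro k _
  ring

end helpers2

set_option maxHeartbeats 2000000 in
/-- central moments of the Durrmeyer operator. -/
theorem stmt12 (n : ℕ) (hn : 1 ≤ n) (x : ℝ) (hx : x ∈ Icc (0:ℝ) 1) :
    Dur n (fun t => t - x) x = (1 - 2 * x) / ((n : ℝ) + 2) ∧
    Dur n (fun t => (t - x) ^ 2) x =
      2 * (x * (1 - x) * ((n : ℝ) - 3) + 1) / (((n : ℝ) + 2) * ((n : ℝ) + 3)) ∧
    Dur n (fun t => (t - x) ^ 3) x =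
      6 * (1 - 2 * x) * (2 * x * (1 - x) * (n : ℝ) + 2 * x ^ 2 - 2 * x + 1) /
        (((n : ℝ) + 2) * ((n : ℝ) + 3) * ((n : ℝ) + 4)) ∧
    Dur n (fun t => (t - x) ^ 4) x =
      12 * (x ^ 2 * (1 - x) ^ 2 * (n : ℝ) ^ 2
          + 3 * x * (1 - x) * (7 * x ^ 2 - 7 * x + 2) * (n : ℝ)
          - 10 * x * (1 - x) * (x ^ 2 - x + 1) + 2) /
        (((n : ℝ) + 2) * ((n : ℝ) + 3) * ((n : ℝ) + 4) * ((n : ℝ) + 5)) := by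
  have S : ∀ r : ℕ, ∑ k ∈ Finset.range (n+1), bp n k x * ∏ i ∈ Finset.range r, ((k:ℝ) - i)
      = (∏ i ∈ Finset.range r, ((n:ℝ) - i)) * x ^ r := by
    intro r
    have h := bern_fall' n r x
    rw [← h]
    apply Finset.sum_congr rfl
    intro k _
    unfold bp
    ring
  have Mgen : ∀ (j : ℕ) (c : ℕ → ℝ),
      (∀ k : ℕ, (∏ i ∈ Finset.range j, ((k:ℝ)+1+i))
          = ∑ r ∈ Finset.range (j+1), c r * ∏ i ∈ Finset.range r, ((k:ℝ)-i)) →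
      Dur n (fun t => t ^ j) x
        = (∑ r ∈ Finset.range (j+1), c r * ((∏ i ∈ Finset.range r, ((n:ℝ)-i)) * x ^ r))
            / (∏ i ∈ Finset.range j, ((n:ℝ)+2+i)) := by
    intro j c hc
    rw [dur_monomial]
    congr 1
    calc ∑ k ∈ Finset.range (n+1), bp n k x * ∏ i ∈ Finset.range j, ((k:ℝ)+1+i)
        = ∑ k ∈ Finset.range (n+1), ∑ r ∈ Finset.range (j+1),
            c r * (bp n k x * ∏ i ∈ Finset.range r, ((k:ℝ)-i)) := by
          apply Finset.sum_congr rfl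
          intro k _
          rw [hc k, Finset.mul_sum]
          apply Finset.sum_congr rfl
          intro r _
          ring
      _ = ∑ r ∈ Finset.range (j+1), c r * ∑ k ∈ Finset.range (n+1),
            bp n k x * ∏ i ∈ Finset.range r, ((k:ℝ)-i) := by
          rw [Finset.sum_comm]
          apply Finset.sum_congr rfl
          intro r _
          rw [Finset.mul_sum]
      _ = _ := by
          apply Finset.sum_congr rfl
          intro r _
          rw [S r]
  set N : ℝ := (n : ℝ) with hN
  have M0 : Dur n (fun t => t ^ 0) x = 1 := by
    have := Mgen 0 (fun _ => 1) (fun k => by simp)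
    simpa using this
  have M1 : Dur n (fun t => t ^ 1) x = (N * x + 1) / (N + 2) := by
    have := Mgen 1 (fun r => if r = 0 then 1 else 1)
      (fun k => by simp [Finset.prod_range_succ, Finset.sum_range_succ]; ring)
    rw [this]
    simp [Finset.prod_range_succ, Finset.sum_range_succ]
    try ring_nf
  have M2 : Dur n (fun t => t ^ 2) x
      = (N * (N - 1) * x ^ 2 + 4 * N * x + 2) / ((N + 2) * (N + 3)) := by
    have := Mgen 2 (fun r => if r = 0 then 2 else if r = 1 then 4 else 1)
      (fun k => by simp [Finset.prod_range_succ, Finset.sum_range_succ]; ring)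
    rw [this]
    simp [Finset.prod_range_succ, Finset.sum_range_succ]
    try ring_nf
  have M3 : Dur n (fun t => t ^ 3) x
      = (N * (N-1) * (N-2) * x ^ 3 + 9 * N * (N-1) * x ^ 2 + 18 * N * x + 6)
          / ((N + 2) * (N + 3) * (N + 4)) := by
    have := Mgen 3 (fun r => if r = 0 then 6 else if r = 1 then 18 else if r = 2 then 9 else 1)
      (fun k => by simp [Finset.prod_range_succ, Finset.sum_range_succ]; ring)
    rw [this]
    simp [Finset.prod_range_succ, Finset.sum_range_succ]
    try ring_nf
  have M4 : Dur n (fun t => t ^ 4) x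
      = (N * (N-1) * (N-2) * (N-3) * x ^ 4 + 16 * N * (N-1) * (N-2) * x ^ 3
          + 72 * N * (N-1) * x ^ 2 + 96 * N * x + 24)
          / ((N + 2) * (N + 3) * (N + 4) * (N + 5)) := by
    have := Mgen 4 (fun r => if r = 0 then 24 else if r = 1 then 96 else if r = 2 then 72
        else if r = 3 then 16 else 1)
      (fun k => by simp [Finset.prod_range_succ, Finset.sum_range_succ]; ring)
    rw [this]
    simp [Finset.prod_range_succ, Finset.sum_range_succ]
    try ring_nf
  have h2 : (N + 2) ≠ 0 := by positivity
  have h3 : (N + 3) ≠ 0 := by positivity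
  have h4 : (N + 4) ≠ 0 := by positivity
  have h5 : (N + 5) ≠ 0 := by positivity
  refine ⟨?_, ?_, ?_, ?_⟩
  · have h1 : (fun t : ℝ => t - x) = fun t => (t - x) ^ 1 := by ext t; ring
    rw [h1, dur_centered]
    simp only [Finset.sum_range_succ, Finset.sum_range_zero]
    rw [M0, M1]
    norm_num [Nat.choose]
    field_simp
    ring
  · rw [dur_centered]
    simp only [Finset.sum_range_succ, Finset.sum_range_zero]
    rw [M0, M1, M2]
    norm_num [Nat.choose]
    field_simp
    ring
  · rw [dur_centered]
    simp only [Finset.sum_range_succ, Finset.sum_range_zero]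
    rw [M0, M1, M2, M3]
    norm_num [Nat.choose]
    field_simp
    ring
  · rw [dur_centered]
    simp only [Finset.sum_range_succ, Finset.sum_range_zero]
    rw [M0, M1, M2, M3, M4]
    norm_num [Nat.choose]
    field_simp
    ring
end
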